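/- Let n ≥ 2 and let 𝒢 be a subgroup of the multiplicative semigroup of n×n matrices over the tropical semiring (i.e., a subset closed under tropical matrix multiplication that forms a group under this operation). If the row rank of some matrix A ∈ 𝒢 is not full, then 𝒢 admits a faithful representation by tropical (n−1)×(n−1) matrices, i.e., there exists an injective map φ from 𝒢 into 𝕋^{(n−1)×(n−1)} satisfying φ(G ⊗ H) = φ(G) ⊗ φ(H) for all G, H ∈ 𝒢. -/

import Mathlib

/-- The tropical (max-plus) semiring carrier: `ℝ ∪ {-∞}`, with `⊥` playing the
role of `-∞`. -/
abbrev Trop : Type := WithBot ℝ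

/-- Tropical matrix multiplication: `(A ⊗ B) i j = max_k (A i k + B k j)`. -/
def tropMulMat {n m p : ℕ} (A : Matrix (Fin n) (Fin m) Trop)
    (B : Matrix (Fin m) (Fin p) Trop) : Matrix (Fin n) (Fin p) Trop :=
  fun i j => Finset.univ.sup fun k => A i k + B k j

/-- A tropical matrix has full row rank if no row is a tropical linear
combination of the other rows. -/
def FullRowRank {n m : ℕ} (B : Matrix (Fin n) (Fin m) Trop) : Prop :=
  ¬ ∃ (i : Fin n) (lam : Fin n → Trop),
      ∀ t, B i t = (Finset.univ.erase i).sup fun k => lam k + B k t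

/-- A subset of the semigroup of tropical `n×n` matrices which is closed under
tropical matrix multiplication and forms a group under it (its neutral element
need not be the neutral element of the whole semigroup). -/
def IsMatSubgroup {n : ℕ} (S : Set (Matrix (Fin n) (Fin n) Trop)) : Prop :=
  (∀ A ∈ S, ∀ B ∈ S, tropMulMat A B ∈ S) ∧
  ∃ E ∈ S, (∀ A ∈ S, tropMulMat E A = A ∧ tropMulMat A E = A) ∧
    ∀ A ∈ S, ∃ B ∈ S, tropMulMat A B = E ∧ tropMulMat B A = E

/-! ### Auxiliary lemmas -/

lemma trop_add_finsup {ι : Type*} (s : Finset ι) (c : Trop) (f : ι → Trop) :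
    c + s.sup f = s.sup fun k => c + f k := by
  rcases s.eq_empty_or_nonempty with rfl | hs
  · simp
  · obtain ⟨k0, hk0, hsup⟩ := Finset.exists_mem_eq_sup s hs f
    apply le_antisymm
    · rw [hsup]
      exact Finset.le_sup (f := fun k => c + f k) hk0
    · exact Finset.sup_le fun k hk => add_le_add_right (Finset.le_sup hk) c

lemma trop_finsup_add {ι : Type*} (s : Finset ι) (f : ι → Trop) (c : Trop) :
    s.sup f + c = s.sup fun k => f k + c := by
  rcases s.eq_empty_or_nonempty with rfl | hs
  · simp
  · obtain ⟨k0, hk0, hsup⟩ := Finset.exists_mem_eq_sup s hs f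
    apply le_antisymm
    · rw [hsup]
      exact Finset.le_sup (f := fun k => f k + c) hk0
    · exact Finset.sup_le fun k hk => add_le_add_left (Finset.le_sup hk) c

lemma trop_sup_single {ι : Type*} [Fintype ι] [DecidableEq ι] (b0 : ι) (v : Trop)
    (f : ι → Trop) (h0 : f b0 = v) (h : ∀ b, b ≠ b0 → f b = ⊥) :
    Finset.univ.sup f = v := by
  apply le_antisymm
  · refine Finset.sup_le fun b _ => ?_
    by_cases hb : b = b0
    · subst hb; rw [h0]
    · rw [h b hb]; exact bot_le
  · rw [← h0]; exact Finset.le_sup (Finset.mem_univ b0)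

lemma tropMul_assoc {a b c d : ℕ} (A : Matrix (Fin a) (Fin b) Trop)
    (B : Matrix (Fin b) (Fin c) Trop) (C : Matrix (Fin c) (Fin d) Trop) :
    tropMulMat (tropMulMat A B) C = tropMulMat A (tropMulMat B C) := by
  funext i j
  show (Finset.univ.sup fun k => (Finset.univ.sup fun l => A i l + B l k) + C k j)
     = Finset.univ.sup fun l => A i l + Finset.univ.sup fun k => B l k + C k j
  calc (Finset.univ.sup fun k => (Finset.univ.sup fun l => A i l + B l k) + C k j)
      = Finset.univ.sup fun k => Finset.univ.sup fun l => A i l + (B l k + C k j) := by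
        refine Finset.sup_congr rfl fun k _ => ?_
        rw [trop_finsup_add]
        exact Finset.sup_congr rfl fun l _ => add_assoc _ _ _
    _ = Finset.univ.sup fun l => Finset.univ.sup fun k => A i l + (B l k + C k j) :=
        Finset.sup_comm _ _ _
    _ = Finset.univ.sup fun l => A i l + Finset.univ.sup fun k => B l k + C k j :=
        Finset.sup_congr rfl fun l _ => (trop_add_finsup _ _ _).symm

/-- The row-`i` relation: row `i` is the `lam`-combination of the other rows. -/
def RowRel {n : ℕ} (i : Fin n) (lam : Fin n → Trop)
    (M : Matrix (Fin n) (Fin n) Trop) : Prop :=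
  ∀ t, M i t = (Finset.univ.erase i).sup fun k => lam k + M k t

lemma RowRel.mul {n : ℕ} {i : Fin n} {lam : Fin n → Trop}
    {M : Matrix (Fin n) (Fin n) Trop} (hM : RowRel i lam M)
    (N : Matrix (Fin n) (Fin n) Trop) : RowRel i lam (tropMulMat M N) := by
  intro t
  show (Finset.univ.sup fun j => M i j + N j t)
      = (Finset.univ.erase i).sup fun k => lam k +
          Finset.univ.sup fun j => M k j + N j t
  calc (Finset.univ.sup fun j => M i j + N j t)
      = Finset.univ.sup fun j => (Finset.univ.erase i).sup
          fun k => lam k + (M k j + N j t) := by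
        refine Finset.sup_congr rfl fun j _ => ?_
        rw [hM j, trop_finsup_add]
        exact Finset.sup_congr rfl fun k _ => add_assoc _ _ _
    _ = (Finset.univ.erase i).sup fun k => Finset.univ.sup
          fun j => lam k + (M k j + N j t) := Finset.sup_comm _ _ _
    _ = (Finset.univ.erase i).sup fun k => lam k +
          Finset.univ.sup fun j => M k j + N j t :=
        Finset.sup_congr rfl fun k _ => (trop_add_finsup _ _ _).symm

lemma sup_erase_eq_sup_succAbove {m : ℕ} (i : Fin (m + 1)) (f : Fin (m + 1) → Trop) :
    (Finset.univ.erase i).sup f = Finset.univ.sup fun k => f (i.succAbove k) := by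
  apply le_antisymm
  · refine Finset.sup_le fun b hb => ?_
    obtain ⟨k, rfl⟩ := Fin.exists_succAbove_eq (Finset.mem_erase.mp hb).1
    exact Finset.le_sup (f := fun k => f (i.succAbove k)) (Finset.mem_univ k)
  · refine Finset.sup_le fun k _ => ?_
    exact Finset.le_sup (Finset.mem_erase.mpr ⟨Fin.succAbove_ne i k, Finset.mem_univ _⟩)

/-- Row-deletion matrix. -/
def delR {m : ℕ} (i : Fin (m + 1)) : Matrix (Fin m) (Fin (m + 1)) Trop :=
  fun k b => if b = i.succAbove k then 0 else ⊥

/-- Column insertion matrix: identity on rows `≠ i`, row `i` given by `lam`. -/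
def insC {m : ℕ} (i : Fin (m + 1)) (lam : Fin (m + 1) → Trop) :
    Matrix (Fin (m + 1)) (Fin m) Trop :=
  fun b k => if b = i.succAbove k then 0 else if b = i then lam (i.succAbove k) else ⊥

lemma delR_mul {m : ℕ} (i : Fin (m + 1)) (G : Matrix (Fin (m + 1)) (Fin (m + 1)) Trop)
    (k : Fin m) (t : Fin (m + 1)) : tropMulMat (delR i) G k t = G (i.succAbove k) t := by
  show (Finset.univ.sup fun b => (if b = i.succAbove k then (0 : Trop) else ⊥) + G b t) = _
  refine trop_sup_single (i.succAbove k) _ _ ?_ ?_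
  · rw [if_pos rfl, zero_add]
  · intro b hb; rw [if_neg hb, WithBot.bot_add]

lemma insC_delR_mul {m : ℕ} (i : Fin (m + 1)) (lam : Fin (m + 1) → Trop)
    (G : Matrix (Fin (m + 1)) (Fin (m + 1)) Trop) (hG : RowRel i lam G) :
    tropMulMat (insC i lam) (tropMulMat (delR i) G) = G := by
  funext a t
  show (Finset.univ.sup fun k => insC i lam a k + tropMulMat (delR i) G k t) = G a t
  have hrw : (Finset.univ.sup fun k => insC i lam a k + tropMulMat (delR i) G k t)
      = Finset.univ.sup fun k => insC i lam a k + G (i.succAbove k) t :=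
    Finset.sup_congr rfl fun k _ => by rw [delR_mul]
  rw [hrw]
  by_cases ha : a = i
  · rw [ha]
    have hstep : (Finset.univ.sup fun k => insC i lam i k + G (i.succAbove k) t)
        = Finset.univ.sup fun k => lam (i.succAbove k) + G (i.succAbove k) t := by
      refine Finset.sup_congr rfl fun k _ => ?_
      have h1 : ¬ (i = i.succAbove k) := fun h => Fin.succAbove_ne i k h.symm
      simp only [insC, if_neg h1, if_pos rfl, if_true]
    rw [hstep, ← sup_erase_eq_sup_succAbove i (fun b => lam b + G b t), ← hG t]
  · obtain ⟨k0, hk0⟩ := Fin.exists_succAbove_eq ha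
    refine trop_sup_single k0 _ _ ?_ ?_
    · simp only [insC, if_pos hk0.symm]
      rw [zero_add, hk0]
    · intro k hk
      have h1 : ¬ (a = i.succAbove k) := by
        intro h
        exact hk (Fin.succAbove_right_injective (hk0.trans h) ).symm
      simp only [insC, if_neg h1, if_neg ha]
      exact WithBot.bot_add _

theorem faithful_rep_smaller_of_not_fullRowRank {n : ℕ} (hn : 2 ≤ n)
    (S : Set (Matrix (Fin n) (Fin n) Trop)) (hS : IsMatSubgroup S)
    (A : Matrix (Fin n) (Fin n) Trop) (hA : A ∈ S) (hfull : ¬ FullRowRank A) :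
    ∃ φ : Matrix (Fin n) (Fin n) Trop → Matrix (Fin (n - 1)) (Fin (n - 1)) Trop,
      Set.InjOn φ S ∧
      ∀ G ∈ S, ∀ H ∈ S, φ (tropMulMat G H) = tropMulMat (φ G) (φ H) := by
  obtain ⟨m, rfl⟩ : ∃ m, n = m + 1 := ⟨n - 1, by omega⟩
  obtain ⟨hmul, E, hE, hid, hinv⟩ := hS
  obtain ⟨i, lam, hrelA⟩ := not_not.mp hfull
  have hrelA' : RowRel i lam A := hrelA
  -- the identity has the row relation
  have hrelE : RowRel i lam E := by
    obtain ⟨B, hB, hAB, hBA⟩ := hinv A hA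
    rw [← hAB]; exact hrelA'.mul B
  -- every element of S has the row relation
  have hrelS : ∀ G ∈ S, RowRel i lam G := by
    intro G hG
    rw [← (hid G hG).1]
    exact hrelE.mul G
  set R := delR i with hR
  set C := insC i lam with hC
  have hCR : ∀ G ∈ S, tropMulMat C (tropMulMat R G) = G := fun G hG =>
    insC_delR_mul i lam G (hrelS G hG)
  refine ⟨fun M => tropMulMat (tropMulMat R M) C, ?_, ?_⟩
  · -- injectivity
    intro G hG H hH hφ
    have hφ' : tropMulMat (tropMulMat R G) C = tropMulMat (tropMulMat R H) C := hφ
    have recov : ∀ G ∈ S, tropMulMat (tropMulMat C (tropMulMat (tropMulMat R G) C))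
        (tropMulMat R E) = G := by
      intro G hG
      rw [← tropMul_assoc C (tropMulMat R G) C, hCR G hG, tropMul_assoc, hCR E hE]
      exact (hid G hG).2
    calc G = tropMulMat (tropMulMat C (tropMulMat (tropMulMat R G) C)) (tropMulMat R E) :=
          (recov G hG).symm
      _ = tropMulMat (tropMulMat C (tropMulMat (tropMulMat R H) C)) (tropMulMat R E) := by
          rw [hφ']
      _ = H := recov H hH
  · -- homomorphism
    intro G hG H hH
    show tropMulMat (tropMulMat R (tropMulMat G H)) C
        = tropMulMat (tropMulMat (tropMulMat R G) C) (tropMulMat (tropMulMat R H) C)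
    calc tropMulMat (tropMulMat R (tropMulMat G H)) C
        = tropMulMat (tropMulMat (tropMulMat R G) H) C := by rw [← tropMul_assoc R G H]
      _ = tropMulMat (tropMulMat R G) (tropMulMat H C) := by
          rw [tropMul_assoc (tropMulMat R G) H C]
      _ = tropMulMat (tropMulMat R G) (tropMulMat (tropMulMat C (tropMulMat R H)) C) := by
          rw [hCR H hH]
      _ = tropMulMat (tropMulMat R G) (tropMulMat C (tropMulMat (tropMulMat R H) C)) := by
          rw [tropMul_assoc C (tropMulMat R H) C]
      _ = tropMulMat (tropMulMat (tropMulMat R G) C) (tropMulMat (tropMulMat R H) C) := by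
          rw [← tropMul_assoc (tropMulMat R G) C (tropMulMat (tropMulMat R H) C)]
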